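/- arXiv:0809.0529 — 5 statements merged into one kernel-verified Lean document; each statement's English description precedes it below -/
import Mathlib

section
/- Let (X,d_X) and (Y,d_Y) be metric spaces, f: X→X, g: Y→Y and h: X→Y satisfy h∘f = g∘h. Assume: (i) there is μ>1 with d_X(f(x),f(x')) ≤ μ·d_X(x,x') for all x,x' ∈ X; (ii) there are λ ∈ (1,μ] and R>0 with d_Y(g(y),g(y')) ≥ λ·d_Y(y,y') whenever d_Y(y,y') ≤ R; (iii) there are r>0 and K ∈ (0,R] such that d_X(a,b) ≤ r implies d_Y(h(a),h(b)) ≤ K. Then for all a,b ∈ X with d_X(a,b) ≤ r/μ one has d_Y(h(a),h(b)) ≤ K·(μ·d_X(a,b)/r)^{log λ/log μ}. In particular, h is Hölder continuous with exponent log λ/log μ at small distances. -/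
/-- **Abstract Hölder continuity of a conjugacy.**
Let `h ∘ f = g ∘ h`, where `f` expands distances by at most `μ > 1`,
`g` expands small distances (below `R`) by at least `λ ∈ (1, μ]`, and `h`
maps `r`-small distances into `K`-small distances with `K ≤ R`.  Then for
`dist a b ≤ r / μ` one has
`dist (h a) (h b) ≤ K * (μ * dist a b / r) ^ (log λ / log μ)`,
i.e. `h` is Hölder with exponent `log λ / log μ` at small distances. -/
theorem conjugacy_holder_of_lipschitz_of_expanding
    {X Y : Type*} [MetricSpace X] [MetricSpace Y]
    (f : X → X) (g : Y → Y) (h : X → Y)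
    (hconj : ∀ x : X, h (f x) = g (h x))
    (μ : ℝ) (hμ : 1 < μ)
    (hf : ∀ x x' : X, dist (f x) (f x') ≤ μ * dist x x')
    (lam R : ℝ) (hlam1 : 1 < lam) (hlamμ : lam ≤ μ) (hR : 0 < R)
    (hg : ∀ y y' : Y, dist y y' ≤ R → lam * dist y y' ≤ dist (g y) (g y'))
    (r K : ℝ) (hr : 0 < r) (hK0 : 0 < K) (hKR : K ≤ R)
    (hh : ∀ a b : X, dist a b ≤ r → dist (h a) (h b) ≤ K) :
    ∀ a b : X, dist a b ≤ r / μ →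
      dist (h a) (h b) ≤ K * (μ * dist a b / r) ^ (Real.log lam / Real.log μ) := by
  intro a b hab
  have hμ0 : (0:ℝ) < μ := lt_trans one_pos hμ
  have hlam0 : (0:ℝ) < lam := lt_trans one_pos hlam1
  set d := dist a b with hd
  have hd0 : 0 ≤ d := dist_nonneg
  set α := Real.log lam / Real.log μ with hα
  have hlogμ : 0 < Real.log μ := Real.log_pos hμ
  have hloglam : 0 < Real.log lam := Real.log_pos hlam1
  have hα0 : 0 ≤ α := le_of_lt (div_pos hloglam hlogμ)
  by_cases hdz : d = 0
  · have hab' : a = b := by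
      have := dist_eq_zero.mp hdz
      exact this
    subst hab'
    simp only [dist_self]
    positivity
  have hdpos : 0 < d := lt_of_le_of_ne hd0 (Ne.symm hdz)
  -- conjugacy for iterates
  have hconjn : ∀ (k : ℕ) (x : X), h (f^[k] x) = g^[k] (h x) := by
    intro k
    induction k with
    | zero => intro x; simp
    | succ k ih =>
      intro x
      rw [Function.iterate_succ_apply', Function.iterate_succ_apply', hconj, ih]
  -- distance growth under f
  have hfk : ∀ k : ℕ, dist (f^[k] a) (f^[k] b) ≤ μ ^ k * d := by
    intro k
    induction k with
    | zero => simp [hd]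
    | succ k ih =>
      rw [Function.iterate_succ_apply', Function.iterate_succ_apply']
      calc dist (f (f^[k] a)) (f (f^[k] b)) ≤ μ * dist (f^[k] a) (f^[k] b) := hf _ _
        _ ≤ μ * (μ ^ k * d) := by
              exact mul_le_mul_of_nonneg_left ih (le_of_lt hμ0)
        _ = μ ^ (k+1) * d := by ring
  -- main expansion estimate
  have main : ∀ k : ℕ, μ ^ k * d ≤ r →
      lam ^ k * dist (h a) (h b) ≤ dist (h (f^[k] a)) (h (f^[k] b)) := by
    intro k
    induction k with
    | zero => intro _; simp
    | succ k ih =>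
      intro hk1
      have hmono : μ ^ k * d ≤ μ ^ (k+1) * d :=
        mul_le_mul_of_nonneg_right (pow_le_pow_right₀ (le_of_lt hμ) (Nat.le_succ k)) hd0
      have hk : μ ^ k * d ≤ r := le_trans hmono hk1
      have hDk : dist (h (f^[k] a)) (h (f^[k] b)) ≤ K :=
        hh _ _ (le_trans (hfk k) hk)
      have hDkR : dist (h (f^[k] a)) (h (f^[k] b)) ≤ R := le_trans hDk hKR
      have hstep : lam * dist (h (f^[k] a)) (h (f^[k] b)) ≤
          dist (h (f^[k+1] a)) (h (f^[k+1] b)) := by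
        rw [hconjn (k+1) a, hconjn (k+1) b, Function.iterate_succ_apply',
          Function.iterate_succ_apply']
        rw [hconjn k a, hconjn k b] at hDkR ⊢
        exact hg _ _ hDkR
      calc lam ^ (k+1) * dist (h a) (h b)
          = lam * (lam ^ k * dist (h a) (h b)) := by ring
        _ ≤ lam * dist (h (f^[k] a)) (h (f^[k] b)) :=
            mul_le_mul_of_nonneg_left (ih hk) (le_of_lt hlam0)
        _ ≤ _ := hstep
  -- choose n
  have hex : ∃ m : ℕ, r ≤ μ ^ (m+1) * d := by
    obtain ⟨m, hm⟩ := pow_unbounded_of_one_lt (r / d) hμ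
    exact ⟨m, by
      rw [div_lt_iff₀ hdpos] at hm
      have : μ ^ m * d ≤ μ ^ (m+1) * d := by
        apply mul_le_mul_of_nonneg_right (pow_le_pow_right₀ (le_of_lt hμ) (Nat.le_succ m)) hd0
      linarith⟩
  set n := Nat.find hex with hn
  have hn1 : r ≤ μ ^ (n+1) * d := Nat.find_spec hex
  have hn2 : μ ^ n * d ≤ r := by
    rcases Nat.eq_zero_or_pos n with h0 | h0
    · rw [h0]
      simp only [pow_zero, one_mul]
      calc d ≤ r / μ := hab
        _ ≤ r := by
          rw [div_le_iff₀ hμ0]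
          nlinarith
    · have := Nat.find_min hex (show n - 1 < n from Nat.sub_lt h0 one_pos)
      push_neg at this
      have heq : n - 1 + 1 = n := Nat.succ_pred_eq_of_pos h0
      rw [heq] at this
      exact le_of_lt this
  have hmain := main n hn2
  have hDn : dist (h (f^[n] a)) (h (f^[n] b)) ≤ K := hh _ _ (le_trans (hfk n) hn2)
  have hdh : lam ^ n * dist (h a) (h b) ≤ K := le_trans hmain hDn
  -- now the rpow estimate
  have hs : (μ ^ n : ℝ)⁻¹ ≤ μ * d / r := by
    rw [inv_le_iff_one_le_mul₀ (by positivity), div_mul_eq_mul_div, le_div_iff₀ hr, one_mul]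
    have hpow : μ ^ (n+1) * d = μ * d * μ ^ n := by ring
    linarith [hn1]
  have hspow : ((μ ^ n : ℝ)⁻¹) ^ α ≤ (μ * d / r) ^ α :=
    Real.rpow_le_rpow (by positivity) hs hα0
  have hkey : ((μ ^ n : ℝ)⁻¹) ^ α = (lam ^ n)⁻¹ := by
    rw [Real.rpow_def_of_pos (by positivity), Real.log_inv, Real.log_pow]
    have heq : -(↑n * Real.log μ) * α = -(↑n * Real.log lam) := by
      rw [hα]; field_simp
    rw [heq, Real.exp_neg, ← Real.log_pow, Real.exp_log (by positivity)]
  have hfin : dist (h a) (h b) ≤ K * (lam ^ n)⁻¹ := by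
    have hpow : (0:ℝ) < lam ^ n := by positivity
    rw [mul_comm, inv_mul_eq_div, le_div_iff₀ hpow]
    calc dist (h a) (h b) * lam ^ n = lam ^ n * dist (h a) (h b) := mul_comm _ _
      _ ≤ K := hdh
  calc dist (h a) (h b) ≤ K * (lam ^ n)⁻¹ := hfin
    _ = K * ((μ ^ n : ℝ)⁻¹) ^ α := by rw [hkey]
    _ ≤ K * (μ * d / r) ^ α := mul_le_mul_of_nonneg_left hspow (le_of_lt hK0)
end

section
/- Let r > 0 and let γ: [0,∞) → ℝ be continuously differentiable with γ'(0) = 0, γ' Lipschitz on [0,∞), and γ(ρ) = 0 for all ρ ≥ r. Define θ: ℝ² → ℝ² by θ(p) = R_{γ(‖p‖)}·p, where R_α is the matrix [[cos α, sin α],[−sin α, cos α]] (and θ(0)=0). Then θ is differentiable at every point of ℝ² and its derivative Dθ: ℝ² → L(ℝ²,ℝ²) is Lipschitz continuous; that is, θ is a C^{1+Lip} map. -/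
set_option maxHeartbeats 1600000

noncomputable section

abbrev E2 := EuclideanSpace ℝ (Fin 2)

/-- The (clockwise) rotation matrix `R_α = [[cos α, sin α], [−sin α, cos α]]`. -/
def rotM (α : ℝ) : Matrix (Fin 2) (Fin 2) ℝ :=
  !![Real.cos α, Real.sin α; -Real.sin α, Real.cos α]

/-- The rotation `R_α` acting on `ℝ²`. -/
def rot (α : ℝ) : E2 →L[ℝ] E2 := Matrix.toEuclideanCLM (𝕜 := ℝ) (rotM α)

/-- The map `θ(p) = R_{γ(‖p‖)} p`, rotating each circle centered at the
origin rigidly by the angle `γ(radius)`. -/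
def theta (γ : ℝ → ℝ) (p : E2) : E2 := rot (γ ‖p‖) p

/-! ### Auxiliary material -/

/-- Rotation by `π/2` (clockwise), i.e. the matrix `[[0,1],[-1,0]]` on `ℝ²`. -/
def jc : E2 →L[ℝ] E2 := Matrix.toEuclideanCLM (𝕜 := ℝ) !![0,1;-1,0]

lemma jc_apply0 (v : E2) : jc v 0 = v 1 := by
  have := congrFun (Matrix.ofLp_toEuclideanCLM (𝕜 := ℝ) !![0,1;-1,0] v) 0
  simp only [jc]; rw [this]
  simp [Matrix.toLin'_apply, Matrix.mulVec, dotProduct, Fin.sum_univ_two]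

lemma jc_apply1 (v : E2) : jc v 1 = -v 0 := by
  have := congrFun (Matrix.ofLp_toEuclideanCLM (𝕜 := ℝ) !![0,1;-1,0] v) 1
  simp only [jc]; rw [this]
  simp [Matrix.toLin'_apply, Matrix.mulVec, dotProduct, Fin.sum_univ_two]

lemma jc_norm (v : E2) : ‖jc v‖ = ‖v‖ := by
  rw [EuclideanSpace.norm_eq, EuclideanSpace.norm_eq]
  simp [Fin.sum_univ_two, jc_apply0, jc_apply1]
  ring_nf

lemma jc_opNorm : ‖jc‖ ≤ 1 := jc.opNorm_le_bound zero_le_one (fun v => by rw [jc_norm]; simp)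

lemma rot_eq_smul (α : ℝ) : rot α = Real.cos α • (1 : E2 →L[ℝ] E2) + Real.sin α • jc := by
  have : rotM α = Real.cos α • (1 : Matrix (Fin 2) (Fin 2) ℝ) + Real.sin α • !![0,1;-1,0] := by
    ext i j; fin_cases i <;> fin_cases j <;> simp [rotM, Matrix.one_fin_two]
  rw [rot, this, map_add, map_smul, map_smul, map_one]
  rfl

lemma theta_eq (γ : ℝ → ℝ) :
    theta γ = fun p : E2 => Real.cos (γ ‖p‖) • p + Real.sin (γ ‖p‖) • jc p := by
  funext p
  simp [theta, rot_eq_smul, ContinuousLinearMap.add_apply, ContinuousLinearMap.smul_apply,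
    ContinuousLinearMap.one_apply]

lemma T_sub (p q w w' : E2) :
    (innerSL ℝ p).smulRight w - (innerSL ℝ q).smulRight w'
      = (innerSL ℝ (p - q)).smulRight w + (innerSL ℝ q).smulRight (w - w') := by
  ext v
  simp only [ContinuousLinearMap.sub_apply, ContinuousLinearMap.add_apply,
    ContinuousLinearMap.smulRight_apply, innerSL_apply_apply, inner_sub_left, sub_smul, smul_sub]
  simp only [PiLp.add_apply, PiLp.sub_apply, PiLp.smul_apply, smul_eq_mul]
  ring

lemma T_norm (p w : E2) : ‖(innerSL ℝ p).smulRight w‖ = ‖p‖ * ‖w‖ := by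
  rw [ContinuousLinearMap.norm_smulRight_apply, innerSL_apply_norm]

lemma smulRight_rearrange (a b : ℝ) (p w : E2) :
    ((a • (b • innerSL ℝ p)).smulRight w) = (innerSL ℝ p).smulRight ((a * b) • w) := by
  ext v
  simp only [ContinuousLinearMap.smulRight_apply, ContinuousLinearMap.smul_apply, smul_smul]
  simp only [PiLp.smul_apply, smul_eq_mul]
  ring

lemma cos_lip (a b : ℝ) : |Real.cos a - Real.cos b| ≤ |a - b| := by
  have := Convex.norm_image_sub_le_of_norm_hasDerivWithin_le
    (f := Real.cos) (f' := fun x => -Real.sin x) (C := 1) (s := Set.univ)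
    (fun x _ => (Real.hasDerivAt_cos x).hasDerivWithinAt)
    (fun x _ => by
      rw [Real.norm_eq_abs, abs_neg]
      exact abs_le.2 ⟨Real.neg_one_le_sin x, Real.sin_le_one x⟩)
    convex_univ (Set.mem_univ b) (Set.mem_univ a)
  simpa using this

lemma sin_lip (a b : ℝ) : |Real.sin a - Real.sin b| ≤ |a - b| := by
  have := Convex.norm_image_sub_le_of_norm_hasDerivWithin_le
    (f := Real.sin) (f' := fun x => Real.cos x) (C := 1) (s := Set.univ)
    (fun x _ => (Real.hasDerivAt_sin x).hasDerivWithinAt)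
    (fun x _ => by
      rw [Real.norm_eq_abs]
      exact abs_le.2 ⟨Real.neg_one_le_cos x, Real.cos_le_one x⟩)
    convex_univ (Set.mem_univ b) (Set.mem_univ a)
  simpa using this

/-- Generic estimate for the "radial" part of the derivative on the ball of radius `2r`. -/
lemma term_est (K r : ℝ) (hK : 0 ≤ K) (hr : 0 < r)
    (g u : E2 → ℝ) (V : E2 →L[ℝ] E2)
    (hg1 : ∀ p, |g p| ≤ 1) (hglip : ∀ p q : E2, |g p - g q| ≤ K * r * ‖p - q‖)
    (hu : ∀ p, |u p| ≤ K) (huρ : ∀ p, |u p| * ‖p‖ ≤ K * r)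
    (hu2 : ∀ p q : E2, |u p - u q| * ‖p‖ ≤ 2 * K * ‖p - q‖)
    (hV : ∀ v, ‖V v‖ ≤ ‖v‖)
    (p q : E2) (hp : ‖p‖ ≤ 2 * r) (hq : ‖q‖ ≤ 2 * r) :
    ‖(innerSL ℝ p).smulRight ((g p * u p) • V p)
        - (innerSL ℝ q).smulRight ((g q * u q) • V q)‖
      ≤ (7 * K * r + 2 * K ^ 2 * r ^ 3) * ‖p - q‖ := by
  have hnn : (0:ℝ) ≤ ‖p - q‖ := norm_nonneg _
  have hζp : ‖(g p * u p) • V p‖ ≤ K * r := by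
    rw [norm_smul, Real.norm_eq_abs, abs_mul]
    have h1 : |g p| * |u p| * ‖V p‖ ≤ 1 * (|u p| * ‖p‖) := by
      rw [mul_assoc]
      apply mul_le_mul (hg1 p) _ (by positivity) zero_le_one
      exact mul_le_mul_of_nonneg_left (hV p) (abs_nonneg _)
    linarith [huρ p]
  have hsplit : (g p * u p) • V p - (g q * u q) • V q
      = (g p * u p - g q * u q) • V p + (g q * u q) • (V p - V q) := by
    rw [sub_smul, smul_sub]; abel
  have h1 : ‖(g p * u p - g q * u q) • V p‖
      ≤ (K * r * ‖p - q‖) * (K * r) + 2 * K * ‖p - q‖ := by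
    rw [norm_smul, Real.norm_eq_abs]
    have hd : |g p * u p - g q * u q| * ‖V p‖
        ≤ (|g p - g q| * |u p| + |g q| * |u p - u q|) * ‖p‖ := by
      apply mul_le_mul _ (hV p) (norm_nonneg _) (by positivity)
      calc |g p * u p - g q * u q|
          = |(g p - g q) * u p + g q * (u p - u q)| := by ring_nf
        _ ≤ |(g p - g q) * u p| + |g q * (u p - u q)| := abs_add_le _ _
        _ = |g p - g q| * |u p| + |g q| * |u p - u q| := by rw [abs_mul, abs_mul]
    have e1 : |g p - g q| * |u p| * ‖p‖ ≤ (K * r * ‖p - q‖) * (K * r) := by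
      rw [mul_assoc]
      exact mul_le_mul (hglip p q) (huρ p) (by positivity) (by positivity)
    have e2 : |g q| * (|u p - u q| * ‖p‖) ≤ 1 * (2 * K * ‖p - q‖) :=
      mul_le_mul (hg1 q) (hu2 p q) (by positivity) zero_le_one
    nlinarith [abs_nonneg (g p - g q), abs_nonneg (u p), norm_nonneg p]
  have h2 : ‖(g q * u q) • (V p - V q)‖ ≤ K * ‖p - q‖ := by
    rw [norm_smul, Real.norm_eq_abs, abs_mul]
    have hVpq : ‖V p - V q‖ ≤ ‖p - q‖ := by rw [← map_sub]; exact hV _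
    have h3 : |g q| * |u q| ≤ 1 * K := mul_le_mul (hg1 q) (hu q) (abs_nonneg _) zero_le_one
    calc |g q| * |u q| * ‖V p - V q‖ ≤ (1 * K) * ‖p - q‖ :=
          mul_le_mul h3 hVpq (norm_nonneg _) (by positivity)
      _ = K * ‖p - q‖ := by ring
  have hζdiff : ‖(g p * u p) • V p - (g q * u q) • V q‖
      ≤ (K * r * ‖p - q‖) * (K * r) + 2 * K * ‖p - q‖ + K * ‖p - q‖ := by
    rw [hsplit]
    calc ‖(g p * u p - g q * u q) • V p + (g q * u q) • (V p - V q)‖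
        ≤ ‖(g p * u p - g q * u q) • V p‖ + ‖(g q * u q) • (V p - V q)‖ := norm_add_le _ _
      _ ≤ _ := by linarith
  calc ‖(innerSL ℝ p).smulRight ((g p * u p) • V p)
        - (innerSL ℝ q).smulRight ((g q * u q) • V q)‖
      = ‖(innerSL ℝ (p - q)).smulRight ((g p * u p) • V p)
          + (innerSL ℝ q).smulRight ((g p * u p) • V p - (g q * u q) • V q)‖ := by
        rw [T_sub]
    _ ≤ ‖p - q‖ * ‖(g p * u p) • V p‖
          + ‖q‖ * ‖(g p * u p) • V p - (g q * u q) • V q‖ := by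
        refine (norm_add_le _ _).trans ?_
        rw [T_norm, T_norm]
    _ ≤ ‖p - q‖ * (K * r)
          + (2 * r) * ((K * r * ‖p - q‖) * (K * r) + 2 * K * ‖p - q‖ + K * ‖p - q‖) := by
        have hb1 : ‖p - q‖ * ‖(g p * u p) • V p‖ ≤ ‖p - q‖ * (K * r) :=
          mul_le_mul_of_nonneg_left hζp hnn
        have hb2 : ‖q‖ * ‖(g p * u p) • V p - (g q * u q) • V q‖
            ≤ (2 * r) * ((K * r * ‖p - q‖) * (K * r) + 2 * K * ‖p - q‖ + K * ‖p - q‖) :=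
          mul_le_mul hq hζdiff (norm_nonneg _) (by positivity)
        linarith
    _ = (7 * K * r + 2 * K ^ 2 * r ^ 3) * ‖p - q‖ := by ring

/-- Radial coefficient of the derivative of `p ↦ γ ‖p‖`. -/
def uAux (γ' : ℝ → ℝ) (p : E2) : ℝ := if ‖p‖ = 0 then 0 else γ' ‖p‖ / ‖p‖

/-- The explicit candidate for the derivative of `theta γ`. -/
def DAux (γ γ' : ℝ → ℝ) (p : E2) : E2 →L[ℝ] E2 :=
  (Real.cos (γ ‖p‖) • ContinuousLinearMap.id ℝ E2
    + ((-Real.sin (γ ‖p‖)) • (uAux γ' p • innerSL ℝ p)).smulRight p)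
  + (Real.sin (γ ‖p‖) • jc
    + (Real.cos (γ ‖p‖) • (uAux γ' p • innerSL ℝ p)).smulRight (jc p))

lemma DAux_alt (γ γ' : ℝ → ℝ) (p : E2) :
    DAux γ γ' p =
      (Real.cos (γ ‖p‖) • ContinuousLinearMap.id ℝ E2
        + (innerSL ℝ p).smulRight
            (((-Real.sin (γ ‖p‖)) * uAux γ' p) • (ContinuousLinearMap.id ℝ E2) p))
      + (Real.sin (γ ‖p‖) • jc
        + (innerSL ℝ p).smulRight ((Real.cos (γ ‖p‖) * uAux γ' p) • jc p)) := by
  rw [DAux, smulRight_rearrange, smulRight_rearrange]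
  rfl

/-- **The rigid circle-rotation map `θ` is `C^{1+Lip}`.**
If `γ : [0,∞) → ℝ` is continuously differentiable with `γ'(0) = 0`,
`γ'` Lipschitz, and `γ ≡ 0` on `[r, ∞)`, then `θ(p) = R_{γ(‖p‖)} p` is
differentiable everywhere and its derivative `Dθ` is Lipschitz. -/
theorem theta_differentiable_and_fderiv_lipschitz
    (r : ℝ) (hr : 0 < r) (γ γ' : ℝ → ℝ) (K : NNReal)
    (hderiv : ∀ ρ ∈ Set.Ici (0 : ℝ), HasDerivWithinAt γ (γ' ρ) (Set.Ici 0) ρ)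
    (hγ'0 : γ' 0 = 0)
    (hlip : LipschitzOnWith K γ' (Set.Ici 0))
    (hvanish : ∀ ρ : ℝ, r ≤ ρ → γ ρ = 0) :
    Differentiable ℝ (theta γ) ∧
      ∃ K' : NNReal, LipschitzWith K' (fun p => fderiv ℝ (theta γ) p) := by
  have hK : (0:ℝ) ≤ (K:ℝ) := K.coe_nonneg
  -- ### Scalar lemmas about γ and γ'
  have hKa : ∀ a : ℝ, 0 ≤ a → |γ' a| ≤ K * a := by
    intro a ha
    have := hlip.dist_le_mul a ha 0 Set.self_mem_Ici
    rw [Real.dist_eq, Real.dist_eq, hγ'0, sub_zero, sub_zero] at this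
    rwa [abs_of_nonneg ha] at this
  have hγ'gt : ∀ a : ℝ, r < a → γ' a = 0 := by
    intro a ha
    have h1 : HasDerivAt γ (γ' a) a :=
      (hderiv a (le_of_lt (hr.trans ha))).hasDerivAt (Ici_mem_nhds (hr.trans ha))
    have h2 : HasDerivAt γ 0 a := by
      have hev : (fun _ : ℝ => (0:ℝ)) =ᶠ[nhds a] γ := by
        filter_upwards [Ioi_mem_nhds ha] with x hx
        exact (hvanish x (le_of_lt hx)).symm
      exact (hasDerivAt_const a (0:ℝ)).congr_of_eventuallyEq hev.symm
    exact h1.unique h2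
  have hγ'ge : ∀ a : ℝ, r ≤ a → γ' a = 0 := by
    intro a ha
    rcases eq_or_lt_of_le ha with h | h
    · have h0 : |γ' a| ≤ 0 := by
        apply le_of_forall_pos_le_add
        intro ε hε
        have hb : r < a + ε / (K + 1) := by
          rw [← h]; have : (0:ℝ) < ε / (K+1) := by positivity
          linarith
        have := hlip.dist_le_mul a (le_of_lt (hr.trans_le ha)) (a + ε/(K+1))
          (le_of_lt (hr.trans hb))
        rw [Real.dist_eq, Real.dist_eq, hγ'gt _ hb, sub_zero] at this
        have h2 : |a - (a + ε/(K+1))| = ε/(K+1) := by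
          have hnn : (0:ℝ) ≤ ε/(K+1) := by positivity
          rw [abs_of_nonpos (by linarith : a - (a + ε/(K+1)) ≤ 0)]
          ring
        rw [h2] at this
        have hK1 : (K:ℝ) * (ε/(K+1)) ≤ ε := by
          rw [div_eq_inv_mul]
          have hpos : (0:ℝ) < (K:ℝ)+1 := by positivity
          rw [mul_comm ((K:ℝ)+1)⁻¹ ε, ← mul_assoc]
          have : (K:ℝ) * ε ≤ ((K:ℝ)+1) * ε := by nlinarith [hε.le]
          calc (K:ℝ) * ε * ((K:ℝ)+1)⁻¹ ≤ ((K:ℝ)+1) * ε * ((K:ℝ)+1)⁻¹ := by gcongr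
            _ = ε := by field_simp
        linarith
      exact abs_eq_zero.1 (le_antisymm h0 (abs_nonneg _))
    · exact hγ'gt a h
  have hKr : ∀ a : ℝ, 0 ≤ a → |γ' a| ≤ K * r := by
    intro a ha
    rcases le_or_gt a r with h | h
    · exact (hKa a ha).trans (by nlinarith)
    · rw [hγ'gt a h, abs_zero]; positivity
  have hγlip : ∀ a ∈ Set.Ici (0:ℝ), ∀ b ∈ Set.Ici (0:ℝ), |γ a - γ b| ≤ K * r * |a - b| := by
    intro a ha b hb
    have := Convex.norm_image_sub_le_of_norm_hasDerivWithin_le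
      (f := γ) (f' := γ') (C := K * r) (s := Set.Ici 0)
      (fun x hx => hderiv x hx) (fun x hx => by rw [Real.norm_eq_abs]; exact hKr x hx)
      (convex_Ici 0) hb ha
    rwa [Real.norm_eq_abs] at this
  have hquad : ∀ a : ℝ, 0 ≤ a → |γ a - γ 0| ≤ K * a ^ 2 := by
    intro a ha
    have := Convex.norm_image_sub_le_of_norm_hasDerivWithin_le
      (f := γ) (f' := γ') (C := K * a) (s := Set.Icc 0 a)
      (fun x hx => (hderiv x hx.1).mono (Set.Icc_subset_Ici_self))
      (fun x hx => by
        rw [Real.norm_eq_abs]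
        exact (hKa x hx.1).trans (by nlinarith [hx.2]))
      (convex_Icc 0 a) (Set.left_mem_Icc.2 ha) (Set.right_mem_Icc.2 ha)
    rw [Real.norm_eq_abs] at this
    calc |γ a - γ 0| ≤ K * a * |a - 0| := this
      _ = K * a ^ 2 := by rw [sub_zero, abs_of_nonneg ha]; ring
  -- ### Differentiability of `p ↦ γ ‖p‖`
  have hφd : ∀ p : E2, HasFDerivAt (fun q : E2 => γ ‖q‖) (uAux γ' p • innerSL ℝ p) p := by
    intro p
    rcases eq_or_ne p 0 with rfl | hp
    · have hz : uAux γ' (0:E2) • innerSL ℝ (0:E2) = (0 : E2 →L[ℝ] ℝ) := by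
        simp [uAux]
      rw [hz]
      rw [hasFDerivAt_iff_isLittleO_nhds_zero, Asymptotics.isLittleO_iff]
      intro c hc
      have hball : Metric.ball (0 : E2) (c / (K + 1)) ∈ nhds (0 : E2) :=
        Metric.ball_mem_nhds 0 (by positivity)
      filter_upwards [hball] with q hq
      simp only [Metric.mem_ball, dist_zero_right] at hq
      simp only [zero_add, ContinuousLinearMap.zero_apply, sub_zero, norm_zero]
      rw [Real.norm_eq_abs]
      calc |γ ‖q‖ - γ (0:ℝ)| ≤ K * ‖q‖ ^ 2 := hquad _ (norm_nonneg q)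
        _ = K * ‖q‖ * ‖q‖ := by ring
        _ ≤ K * (c / (K+1)) * ‖q‖ := by
            have h2 := hq.le
            gcongr
        _ ≤ (K+1) * (c / (K+1)) * ‖q‖ := by
            have hd : (0:ℝ) ≤ c / (K+1) := by positivity
            gcongr
            linarith
        _ = c * ‖q‖ := by field_simp
    · have hρ : 0 < ‖p‖ := norm_pos_iff.2 hp
      have hu : uAux γ' p = γ' ‖p‖ / ‖p‖ := by
        simp only [uAux]; rw [if_neg (norm_ne_zero_iff.2 hp)]
      rw [hu]
      have hinner : HasFDerivAt (fun q : E2 => (inner ℝ q q : ℝ))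
          ((fderivInnerCLM ℝ (p, p)).comp
            ((ContinuousLinearMap.id ℝ E2).prod (ContinuousLinearMap.id ℝ E2))) p :=
        (hasFDerivAt_id p).inner ℝ (hasFDerivAt_id p)
      have ht : (inner ℝ p p : ℝ) = ‖p‖ * ‖p‖ := real_inner_self_eq_norm_mul_norm p
      have hsqrt : HasDerivAt Real.sqrt (1 / (2 * Real.sqrt (inner ℝ p p : ℝ))) (inner ℝ p p : ℝ) :=
        Real.hasDerivAt_sqrt (by rw [ht]; positivity)
      have hsq : Real.sqrt (inner ℝ p p : ℝ) = ‖p‖ := by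
        rw [ht, Real.sqrt_mul_self (norm_nonneg p)]
      have hγd : HasDerivAt γ (γ' ‖p‖) ‖p‖ :=
        (hderiv ‖p‖ (norm_nonneg p)).hasDerivAt (Ici_mem_nhds hρ)
      have hcomp : HasDerivAt (fun t => γ (Real.sqrt t))
          (γ' ‖p‖ * (1 / (2 * ‖p‖))) (inner ℝ p p : ℝ) := by
        have := (hsq ▸ hγd).comp (inner ℝ p p : ℝ) hsqrt
        rwa [hsq] at this
      have hfull := HasDerivAt.comp_hasFDerivAt
        (f := fun q : E2 => (inner ℝ q q : ℝ)) p hcomp hinner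
      have heq : (fun q : E2 => γ (Real.sqrt (inner ℝ q q : ℝ))) = fun q : E2 => γ ‖q‖ := by
        funext q
        rw [real_inner_self_eq_norm_mul_norm, Real.sqrt_mul_self (norm_nonneg q)]
      rw [show ((fun t => γ (Real.sqrt t)) ∘ fun q : E2 => (inner ℝ q q : ℝ))
          = fun q : E2 => γ ‖q‖ from heq] at hfull
      refine hfull.congr_fderiv ?_
      ext v
      simp [fderivInnerCLM, real_inner_comm p v]
      field_simp
      ring
  -- ### `theta γ` is differentiable with derivative `DAux`
  have hD : ∀ p : E2, HasFDerivAt (theta γ) (DAux γ γ' p) p := by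
    intro p
    rw [theta_eq γ]
    have hc : HasFDerivAt (fun q : E2 => Real.cos (γ ‖q‖))
        ((-Real.sin (γ ‖p‖)) • (uAux γ' p • innerSL ℝ p)) p :=
      HasDerivAt.comp_hasFDerivAt (f := fun q : E2 => γ ‖q‖) p
        (Real.hasDerivAt_cos (γ ‖p‖)) (hφd p)
    have hs : HasFDerivAt (fun q : E2 => Real.sin (γ ‖q‖))
        (Real.cos (γ ‖p‖) • (uAux γ' p • innerSL ℝ p)) p :=
      HasDerivAt.comp_hasFDerivAt (f := fun q : E2 => γ ‖q‖) p
        (Real.hasDerivAt_sin (γ ‖p‖)) (hφd p)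
    have h1 := hc.smul (hasFDerivAt_id p)
    have h2 := hs.smul (jc.hasFDerivAt (x := p))
    exact h1.add h2
  refine ⟨fun p => (hD p).differentiableAt, ?_⟩
  -- ### The Lipschitz estimate
  have hfder : (fun p => fderiv ℝ (theta γ) p) = fun p => DAux γ γ' p :=
    funext fun p => (hD p).fderiv
  -- ingredients for `term_est`
  have hu_abs : ∀ p : E2, |uAux γ' p| ≤ K := by
    intro p
    rcases eq_or_ne ‖p‖ 0 with h | h
    · simp only [uAux]; rw [if_pos h, abs_zero]; exact hK
    · have hρ : 0 < ‖p‖ := lt_of_le_of_ne (norm_nonneg p) (Ne.symm h)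
      simp only [uAux]; rw [if_neg h, abs_div, abs_of_pos hρ, div_le_iff₀ hρ]
      exact hKa _ (norm_nonneg p)
  have huρ : ∀ p : E2, |uAux γ' p| * ‖p‖ ≤ K * r := by
    intro p
    rcases eq_or_ne ‖p‖ 0 with h | h
    · simp only [uAux]; rw [if_pos h, abs_zero, zero_mul]; positivity
    · have hρ : 0 < ‖p‖ := lt_of_le_of_ne (norm_nonneg p) (Ne.symm h)
      simp only [uAux]; rw [if_neg h, abs_div, abs_of_pos hρ, div_mul_cancel₀ _ (ne_of_gt hρ)]
      exact hKr _ (norm_nonneg p)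
  have hu2 : ∀ p q : E2, |uAux γ' p - uAux γ' q| * ‖p‖ ≤ 2 * K * ‖p - q‖ := by
    intro p q
    have hab : |‖p‖ - ‖q‖| ≤ ‖p - q‖ := abs_norm_sub_norm_le p q
    rcases eq_or_ne ‖p‖ 0 with hp0 | hp0
    · rw [hp0, mul_zero]; positivity
    have hρp : 0 < ‖p‖ := lt_of_le_of_ne (norm_nonneg p) (Ne.symm hp0)
    rcases eq_or_ne ‖q‖ 0 with hq0 | hq0
    · have hq' : q = 0 := norm_eq_zero.1 hq0
      simp only [uAux]
      rw [if_pos hq0, if_neg hp0, sub_zero, abs_div, abs_of_pos hρp,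
        div_mul_cancel₀ _ (ne_of_gt hρp)]
      have : ‖p - q‖ = ‖p‖ := by rw [hq', sub_zero]
      rw [this]
      calc |γ' ‖p‖| ≤ K * ‖p‖ := hKa _ (norm_nonneg p)
        _ ≤ 2 * K * ‖p‖ := by nlinarith [norm_nonneg p]
    have hρq : 0 < ‖q‖ := lt_of_le_of_ne (norm_nonneg q) (Ne.symm hq0)
    simp only [uAux]
    rw [if_neg hp0, if_neg hq0]
    have key0 : |γ' ‖p‖ / ‖p‖ - γ' ‖q‖ / ‖q‖| * ‖p‖
        = |(γ' ‖p‖ - γ' ‖q‖) + γ' ‖q‖ * (‖q‖ - ‖p‖) / ‖q‖| := by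
      rw [← abs_of_pos hρp, ← abs_mul]
      congr 1
      field_simp
      simp only [abs_of_pos hρp]
      ring
    rw [key0]
    have e1 : |γ' ‖p‖ - γ' ‖q‖| ≤ K * |‖p‖ - ‖q‖| := by
      have := hlip.dist_le_mul ‖p‖ (norm_nonneg p) ‖q‖ (norm_nonneg q)
      rwa [Real.dist_eq, Real.dist_eq] at this
    have e2 : |γ' ‖q‖ * (‖q‖ - ‖p‖) / ‖q‖| ≤ K * |‖p‖ - ‖q‖| := by
      rw [abs_div, abs_mul, abs_of_pos hρq, div_le_iff₀ hρq]
      have h3 : |γ' ‖q‖| ≤ K * ‖q‖ := hKa _ (norm_nonneg q)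
      have h4 : |‖q‖ - ‖p‖| = |‖p‖ - ‖q‖| := abs_sub_comm _ _
      rw [h4]
      nlinarith [abs_nonneg (‖p‖ - ‖q‖)]
    calc |(γ' ‖p‖ - γ' ‖q‖) + γ' ‖q‖ * (‖q‖ - ‖p‖) / ‖q‖|
        ≤ |γ' ‖p‖ - γ' ‖q‖| + |γ' ‖q‖ * (‖q‖ - ‖p‖) / ‖q‖| := abs_add_le _ _
      _ ≤ K * |‖p‖ - ‖q‖| + K * |‖p‖ - ‖q‖| := by linarith
      _ = 2 * K * |‖p‖ - ‖q‖| := by ring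
      _ ≤ 2 * K * ‖p - q‖ := mul_le_mul_of_nonneg_left hab (by positivity)
  have hφlip : ∀ p q : E2, |γ ‖p‖ - γ ‖q‖| ≤ K * r * ‖p - q‖ := by
    intro p q
    calc |γ ‖p‖ - γ ‖q‖| ≤ K * r * |‖p‖ - ‖q‖| :=
          hγlip ‖p‖ (norm_nonneg p) ‖q‖ (norm_nonneg q)
      _ ≤ K * r * ‖p - q‖ :=
          mul_le_mul_of_nonneg_left (abs_norm_sub_norm_le p q) (by positivity)
  have hgc1 : ∀ p : E2, |Real.cos (γ ‖p‖)| ≤ 1 := fun p => Real.abs_cos_le_one _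
  have hgs1 : ∀ p : E2, |(-Real.sin (γ ‖p‖))| ≤ 1 := fun p => by
    rw [abs_neg]; exact Real.abs_sin_le_one _
  have hgclip : ∀ p q : E2, |Real.cos (γ ‖p‖) - Real.cos (γ ‖q‖)| ≤ K * r * ‖p - q‖ :=
    fun p q => (cos_lip _ _).trans (hφlip p q)
  have hgslip : ∀ p q : E2,
      |(-Real.sin (γ ‖p‖)) - (-Real.sin (γ ‖q‖))| ≤ K * r * ‖p - q‖ := by
    intro p q
    have : (-Real.sin (γ ‖p‖)) - (-Real.sin (γ ‖q‖)) = -(Real.sin (γ ‖p‖) - Real.sin (γ ‖q‖)) := by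
      ring
    rw [this, abs_neg]
    exact (sin_lip _ _).trans (hφlip p q)
  have hVid : ∀ v : E2, ‖(ContinuousLinearMap.id ℝ E2) v‖ ≤ ‖v‖ := fun v => le_refl _
  have hVjc : ∀ v : E2, ‖jc v‖ ≤ ‖v‖ := fun v => (jc_norm v).le
  -- `DAux = 1` outside the ball of radius `r`
  have hD1 : ∀ p : E2, r ≤ ‖p‖ → DAux γ γ' p = 1 := by
    intro p hpr
    have hφ0 : γ ‖p‖ = 0 := hvanish _ hpr
    have hu0 : uAux γ' p = 0 := by
      rcases eq_or_ne ‖p‖ 0 with h | h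
      · simp only [uAux]; rw [if_pos h]
      · simp only [uAux]; rw [if_neg h, hγ'ge _ hpr, zero_div]
    rw [DAux, hφ0, hu0]
    ext v
    simp [ContinuousLinearMap.one_def]
  -- norm of the difference of the "angular" parts
  have hApart : ∀ p q : E2,
      ‖(Real.cos (γ ‖p‖) - Real.cos (γ ‖q‖)) • ContinuousLinearMap.id ℝ E2
        + (Real.sin (γ ‖p‖) - Real.sin (γ ‖q‖)) • jc‖ ≤ 2 * (K * r) * ‖p - q‖ := by
    intro p q
    refine (norm_add_le _ _).trans ?_
    have n1 : ‖(Real.cos (γ ‖p‖) - Real.cos (γ ‖q‖)) • ContinuousLinearMap.id ℝ E2‖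
        ≤ K * r * ‖p - q‖ := by
      have h := norm_smul_le (Real.cos (γ ‖p‖) - Real.cos (γ ‖q‖)) (ContinuousLinearMap.id ℝ E2)
      rw [Real.norm_eq_abs] at h
      refine h.trans ?_
      calc |Real.cos (γ ‖p‖) - Real.cos (γ ‖q‖)| * ‖ContinuousLinearMap.id ℝ E2‖
          ≤ (K * r * ‖p - q‖) * 1 :=
            mul_le_mul (hgclip p q) ContinuousLinearMap.norm_id_le (norm_nonneg _)
              (by positivity)
        _ = K * r * ‖p - q‖ := by ring
    have n2 : ‖(Real.sin (γ ‖p‖) - Real.sin (γ ‖q‖)) • jc‖ ≤ K * r * ‖p - q‖ := by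
      have h := norm_smul_le (Real.sin (γ ‖p‖) - Real.sin (γ ‖q‖)) jc
      rw [Real.norm_eq_abs] at h
      refine h.trans ?_
      calc |Real.sin (γ ‖p‖) - Real.sin (γ ‖q‖)| * ‖jc‖
          ≤ (K * r * ‖p - q‖) * 1 :=
            mul_le_mul ((sin_lip _ _).trans (hφlip p q)) jc_opNorm (norm_nonneg _)
              (by positivity)
        _ = K * r * ‖p - q‖ := by ring
    linarith
  set C : ℝ := 2 * (K * r) + 2 * (7 * K * r + 2 * K ^ 2 * r ^ 3) + 4 * (K * r) with hCdef
  have hC0 : 0 ≤ C := by positivity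
  -- the main two-point estimate, assuming `‖p‖ ≤ ‖q‖`
  have key : ∀ p q : E2, ‖p‖ ≤ ‖q‖ → ‖DAux γ γ' p - DAux γ γ' q‖ ≤ C * ‖p - q‖ := by
    intro p q hpq
    rcases le_or_gt ‖q‖ (2*r) with hq2r | hq2r
    · -- both points in the ball of radius 2r
      have hp2r : ‖p‖ ≤ 2*r := hpq.trans hq2r
      have hsplit : DAux γ γ' p - DAux γ γ' q =
          ((Real.cos (γ ‖p‖) - Real.cos (γ ‖q‖)) • ContinuousLinearMap.id ℝ E2
            + (Real.sin (γ ‖p‖) - Real.sin (γ ‖q‖)) • jc)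
          + (((innerSL ℝ p).smulRight
                (((-Real.sin (γ ‖p‖)) * uAux γ' p) • (ContinuousLinearMap.id ℝ E2) p)
              - (innerSL ℝ q).smulRight
                (((-Real.sin (γ ‖q‖)) * uAux γ' q) • (ContinuousLinearMap.id ℝ E2) q))
            + ((innerSL ℝ p).smulRight ((Real.cos (γ ‖p‖) * uAux γ' p) • jc p)
              - (innerSL ℝ q).smulRight ((Real.cos (γ ‖q‖) * uAux γ' q) • jc q))) := by
        rw [DAux_alt, DAux_alt,
          sub_smul (Real.cos (γ ‖p‖)) (Real.cos (γ ‖q‖)) (ContinuousLinearMap.id ℝ E2),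
          sub_smul (Real.sin (γ ‖p‖)) (Real.sin (γ ‖q‖)) jc]
        abel
      rw [hsplit]
      have e1 := hApart p q
      have e2 := term_est K r hK hr (fun p => -Real.sin (γ ‖p‖)) (uAux γ')
        (ContinuousLinearMap.id ℝ E2) hgs1 hgslip hu_abs huρ hu2 hVid p q hp2r hq2r
      have e3 := term_est K r hK hr (fun p => Real.cos (γ ‖p‖)) (uAux γ')
        jc hgc1 hgclip hu_abs huρ hu2 hVjc p q hp2r hq2r
      refine (norm_add_le _ _).trans ?_
      refine (add_le_add e1 ((norm_add_le _ _).trans (add_le_add e2 e3))).trans ?_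
      rw [hCdef]
      nlinarith [mul_nonneg (mul_nonneg hK hr.le) (norm_nonneg (p - q)),
        norm_nonneg (p - q)]
    · rcases le_or_gt r ‖p‖ with hpr | hpr
      · -- both outside the ball of radius r: the derivative is constant
        rw [hD1 p hpr, hD1 q (by linarith), sub_self, norm_zero]
        positivity
      · -- far case: `‖p‖ < r`, `‖q‖ > 2r`
        have hgap : r ≤ ‖p - q‖ := by
          have := abs_norm_sub_norm_le p q
          have h1 : ‖q‖ - ‖p‖ ≤ ‖p - q‖ := by
            rw [norm_sub_rev]
            calc ‖q‖ - ‖p‖ ≤ |‖q‖ - ‖p‖| := le_abs_self _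
              _ ≤ ‖q - p‖ := abs_norm_sub_norm_le q p
          linarith
        rw [hD1 q (by linarith)]
        -- bound ‖DAux p − 1‖ by 4 K r²
        have hφsmall : |γ ‖p‖| ≤ K * r * r := by
          have := hγlip ‖p‖ (norm_nonneg p) r hr.le
          rw [hvanish r le_rfl, sub_zero] at this
          have h2 : |‖p‖ - r| ≤ r := by
            rw [abs_of_nonpos (by linarith)]
            have := norm_nonneg p
            linarith
          have h3 := mul_le_mul_of_nonneg_left h2 (mul_nonneg hK hr.le)
          linarith
        have hsplit1 : DAux γ γ' p - 1 =
            ((Real.cos (γ ‖p‖) - 1) • ContinuousLinearMap.id ℝ E2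
              + Real.sin (γ ‖p‖) • jc)
            + ((innerSL ℝ p).smulRight
                (((-Real.sin (γ ‖p‖)) * uAux γ' p) • (ContinuousLinearMap.id ℝ E2) p)
              + (innerSL ℝ p).smulRight ((Real.cos (γ ‖p‖) * uAux γ' p) • jc p)) := by
          rw [DAux_alt,
            sub_smul (Real.cos (γ ‖p‖)) 1 (ContinuousLinearMap.id ℝ E2),
            one_smul ℝ (ContinuousLinearMap.id ℝ E2), ContinuousLinearMap.one_def]
          abel
        have hTb : ∀ (g : ℝ) (w : E2), |g| ≤ 1 → ‖w‖ ≤ ‖p‖ →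
            ‖(innerSL ℝ p).smulRight ((g * uAux γ' p) • w)‖ ≤ K * r * r := by
          intro g w hg hw
          rw [T_norm, norm_smul, Real.norm_eq_abs, abs_mul]
          have h1 : |g| * |uAux γ' p| * ‖w‖ ≤ 1 * |uAux γ' p| * ‖p‖ := by
            apply mul_le_mul _ hw (norm_nonneg _) (by positivity)
            exact mul_le_mul_of_nonneg_right hg (abs_nonneg _)
          have h2 : |uAux γ' p| * ‖p‖ ≤ K * r := huρ p
          have h3 : ‖p‖ ≤ r := hpr.le
          calc ‖p‖ * (|g| * |uAux γ' p| * ‖w‖) ≤ ‖p‖ * (|uAux γ' p| * ‖p‖) := by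
                apply mul_le_mul_of_nonneg_left _ (norm_nonneg p)
                linarith
            _ ≤ r * (K * r) := by
                apply mul_le_mul h3 h2 (by positivity) hr.le
            _ = K * r * r := by ring
        have hfar : ‖DAux γ γ' p - 1‖ ≤ 4 * (K * r) * r := by
          rw [hsplit1]
          have n1 : ‖(Real.cos (γ ‖p‖) - 1) • ContinuousLinearMap.id ℝ E2‖ ≤ K * r * r := by
            have h := norm_smul_le (Real.cos (γ ‖p‖) - 1) (ContinuousLinearMap.id ℝ E2)
            rw [Real.norm_eq_abs] at h
            refine h.trans ?_
            have hc1 : |Real.cos (γ ‖p‖) - 1| ≤ K * r * r := by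
              have := cos_lip (γ ‖p‖) 0
              simp only [Real.cos_zero, sub_zero] at this
              linarith
            calc |Real.cos (γ ‖p‖) - 1| * ‖ContinuousLinearMap.id ℝ E2‖
                ≤ (K * r * r) * 1 :=
                  mul_le_mul hc1 ContinuousLinearMap.norm_id_le (norm_nonneg _) (by positivity)
              _ = K * r * r := by ring
          have n2 : ‖Real.sin (γ ‖p‖) • jc‖ ≤ K * r * r := by
            have h := norm_smul_le (Real.sin (γ ‖p‖)) jc
            rw [Real.norm_eq_abs] at h
            refine h.trans ?_
            have hs1 : |Real.sin (γ ‖p‖)| ≤ K * r * r := by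
              have := sin_lip (γ ‖p‖) 0
              simp only [Real.sin_zero, sub_zero] at this
              linarith
            calc |Real.sin (γ ‖p‖)| * ‖jc‖ ≤ (K * r * r) * 1 :=
                  mul_le_mul hs1 jc_opNorm (norm_nonneg _) (by positivity)
              _ = K * r * r := by ring
          have n3 := hTb (-Real.sin (γ ‖p‖)) ((ContinuousLinearMap.id ℝ E2) p)
            (hgs1 p) (hVid p)
          have n4 := hTb (Real.cos (γ ‖p‖)) (jc p) (hgc1 p) (hVjc p)
          refine (norm_add_le _ _).trans ?_
          refine (add_le_add (norm_add_le _ _) (norm_add_le _ _)).trans ?_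
          have : (K:ℝ) * r * r + K * r * r + (K * r * r + K * r * r) = 4 * (K * r) * r := by
            ring
          linarith
        calc ‖DAux γ γ' p - 1‖ ≤ 4 * (K * r) * r := hfar
          _ ≤ 4 * (K * r) * ‖p - q‖ := by
              apply mul_le_mul_of_nonneg_left hgap (by positivity)
          _ ≤ C * ‖p - q‖ := by
              rw [hCdef]
              nlinarith [mul_nonneg (mul_nonneg hK hr.le) (norm_nonneg (p - q)),
                mul_nonneg (mul_nonneg (mul_nonneg (mul_nonneg hK hK) hr.le)
                  (mul_nonneg hr.le hr.le)) (norm_nonneg (p - q)),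
                norm_nonneg (p - q)]
  refine ⟨C.toNNReal, LipschitzWith.of_dist_le_mul fun p q => ?_⟩
  simp only [dist_eq_norm]
  rw [(hD p).fderiv, (hD q).fderiv, Real.coe_toNNReal C hC0]
  rcases le_total ‖p‖ ‖q‖ with h | h
  · exact key p q h
  · rw [norm_sub_rev, norm_sub_rev p q]
    exact key q p h

end
end

section
/- Let γ: [0,∞) → ℝ and define θ: ℝ² → ℝ² by θ(p) = R_{γ(‖p‖)}·p, where R_α = [[cos α, sin α],[−sin α, cos α]]. Let p ∈ ℝ², p ≠ 0, ρ = ‖p‖, and suppose γ is differentiable at ρ. Denote by J the counterclockwise quarter-turn matrix [[0,−1],[1,0]], and for q ≠ 0 set v(q) = q/‖q‖ (unit radial vector) and u(q) = J·q/‖q‖ (unit vector tangent to the circle through q). Then Dθ(p)(u(p)) = u(θ(p)) and Dθ(p)(v(p)) = v(θ(p)) − ρ·γ'(ρ)·u(θ(p)). Consequently, in the frames (v(p),u(p)) at p and (v(θ(p)),u(θ(p))) at θ(p), the derivative Dθ(p) is the shear matrix [[1,0],[α,1]] with α = −ρ·γ'(ρ); in particular α > 0 when γ'(ρ) < 0.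 -/
noncomputable section

/-- The counterclockwise quarter-turn matrix `J = [[0,−1],[1,0]]`. -/
def Jmat : Matrix (Fin 2) (Fin 2) ℝ := !![0, -1; 1, 0]

/-- The unit radial vector `v(q) = q/‖q‖`. -/
def radialVec (q : E2) : E2 := ‖q‖⁻¹ • q

/-- The unit tangent vector `u(q) = J q/‖q‖` to the circle through `q`. -/
def tangentVec (q : E2) : E2 := ‖q‖⁻¹ • (Matrix.toEuclideanCLM (𝕜 := ℝ) Jmat q)

def Kc : E2 →L[ℝ] E2 := Matrix.toEuclideanCLM (𝕜 := ℝ) Jmat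

lemma Kc_apply0 (q : E2) : Kc q 0 = -(q 1) := by
  show Jmat.mulVec (fun j => q j) 0 = _
  simp [Jmat, Matrix.mulVec, dotProduct, Fin.sum_univ_two]

lemma Kc_apply1 (q : E2) : Kc q 1 = q 0 := by
  show Jmat.mulVec (fun j => q j) 1 = _
  simp [Jmat, Matrix.mulVec, dotProduct, Fin.sum_univ_two]

lemma inner_Kc_self (q : E2) : @inner ℝ _ _ q (Kc q) = 0 := by
  simp [PiLp.inner_apply, Fin.sum_univ_two, Kc_apply0, Kc_apply1]
  ring

lemma Kc_Kc (q : E2) : Kc (Kc q) = -q := by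
  ext i
  fin_cases i <;> simp [Kc_apply0, Kc_apply1]

lemma rotM_eq (α : ℝ) : rotM α = Real.cos α • (1 : Matrix (Fin 2) (Fin 2) ℝ) - Real.sin α • Jmat := by
  ext i j
  fin_cases i <;> fin_cases j <;> simp [rotM, Jmat, Matrix.one_apply]

lemma theta_eq_s10 (γ : ℝ → ℝ) (q : E2) :
    theta γ q = Real.cos (γ ‖q‖) • q - Real.sin (γ ‖q‖) • Kc q := by
  show Matrix.toEuclideanCLM (𝕜 := ℝ) (rotM (γ ‖q‖)) q = _
  rw [rotM_eq, map_sub, map_smul, map_smul, map_one]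
  rfl

lemma norm_theta (γ : ℝ → ℝ) (q : E2) : ‖theta γ q‖ = ‖q‖ := by
  rw [theta_eq_s10]
  set c := γ ‖q‖ with hc
  rw [EuclideanSpace.norm_eq, EuclideanSpace.norm_eq]
  congr 1
  simp only [Fin.sum_univ_two, PiLp.sub_apply, PiLp.smul_apply, smul_eq_mul,
    Kc_apply0, Kc_apply1, Real.norm_eq_abs, sq_abs]
  linear_combination (q 0 ^ 2 + q 1 ^ 2) * (Real.sin_sq_add_cos_sq c)

lemma hasFDerivAt_norm' {p : E2} (hp : p ≠ 0) :
    HasFDerivAt (fun q : E2 => ‖q‖) (‖p‖⁻¹ • innerSL ℝ p) p := by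
  have hnp : ‖p‖ ≠ 0 := norm_ne_zero_iff.mpr hp
  have h1 : HasFDerivAt (fun q : E2 => ‖q‖ ^ 2) (2 • innerSL ℝ p) p :=
    (hasStrictFDerivAt_norm_sq p).hasFDerivAt
  have h2 := (Real.hasDerivAt_sqrt (by positivity : (‖p‖ ^ 2 : ℝ) ≠ 0)).comp_hasFDerivAt p h1
  have hs : Real.sqrt (‖p‖ ^ 2) = ‖p‖ := Real.sqrt_sq (norm_nonneg p)
  have hfun : (fun q : E2 => Real.sqrt (‖q‖ ^ 2)) = fun q : E2 => ‖q‖ := by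
    funext q; exact Real.sqrt_sq (norm_nonneg q)
  simp only [Function.comp_def] at h2
  rw [hfun] at h2
  convert h2 using 1 <;> try rfl
  ext w
  simp only [ContinuousLinearMap.smul_apply, smul_eq_mul, hs, two_smul,
    ContinuousLinearMap.add_apply]
  field_simp
  ring

lemma tangentVec_eq (q : E2) : tangentVec q = ‖q‖⁻¹ • Kc q := rfl


/-- **The shear formula for `Dθ` in the radial/tangent frames.**
For `p ≠ 0`, `ρ = ‖p‖` and `γ` differentiable at `ρ` with `γ'(ρ) = d`,
the map `θ(p) = R_{γ(‖p‖)} p` is differentiable at `p` with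
`Dθ(p) u(p) = u(θ p)` and `Dθ(p) v(p) = v(θ p) − ρ·γ'(ρ)·u(θ p)`;
i.e. in the frames `(v, u)` the derivative is the shear `[[1,0],[α,1]]`
with `α = −ρ·γ'(ρ)`. -/
theorem fderiv_theta_shear_formula
    (γ : ℝ → ℝ) (p : E2) (hp : p ≠ 0) (d : ℝ)
    (hγ : HasDerivAt γ d ‖p‖) :
    DifferentiableAt ℝ (theta γ) p ∧
      fderiv ℝ (theta γ) p (tangentVec p) = tangentVec (theta γ p) ∧
      fderiv ℝ (theta γ) p (radialVec p) =
        radialVec (theta γ p) - (‖p‖ * d) • tangentVec (theta γ p) := by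
  have hnp : ‖p‖ ≠ 0 := norm_ne_zero_iff.mpr hp
  set G : E2 →L[ℝ] ℝ := d • (‖p‖⁻¹ • innerSL ℝ p) with hG
  have hg : HasFDerivAt (fun q : E2 => γ ‖q‖) G p :=
    hγ.comp_hasFDerivAt p (hasFDerivAt_norm' hp)
  have hcos : HasFDerivAt (fun q : E2 => Real.cos (γ ‖q‖)) ((-Real.sin (γ ‖p‖)) • G) p :=
    by exact (Real.hasDerivAt_cos (γ ‖p‖)).comp_hasFDerivAt p hg
  have hsin : HasFDerivAt (fun q : E2 => Real.sin (γ ‖q‖)) ((Real.cos (γ ‖p‖)) • G) p :=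
    by exact (Real.hasDerivAt_sin (γ ‖p‖)).comp_hasFDerivAt p hg
  have h1 := hcos.smul (hasFDerivAt_id p)
  have h2 := hsin.smul Kc.hasFDerivAt
  have hF := h1.sub h2
  simp only [Pi.smul_def', Pi.sub_def, id_eq] at hF
  have hfun : theta γ = fun q => Real.cos (γ ‖q‖) • q - Real.sin (γ ‖q‖) • Kc q :=
    funext (theta_eq_s10 γ)
  rw [← hfun] at hF
  have hGK : G (Kc p) = 0 := by
    rw [hG]
    simp only [ContinuousLinearMap.smul_apply, innerSL_apply_apply, smul_eq_mul,
      inner_Kc_self, mul_zero]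
  have hGp : G p = ‖p‖ * d := by
    simp only [hG, ContinuousLinearMap.smul_apply, innerSL_apply_apply, smul_eq_mul,
      real_inner_self_eq_norm_mul_norm]
    field_simp
  have htv : tangentVec (theta γ p) =
      ‖p‖⁻¹ • (Real.cos (γ ‖p‖) • Kc p + Real.sin (γ ‖p‖) • p) := by
    rw [tangentVec_eq, norm_theta, theta_eq_s10, map_sub, map_smul, map_smul, Kc_Kc]
    module
  have hrv : radialVec (theta γ p) =
      ‖p‖⁻¹ • (Real.cos (γ ‖p‖) • p - Real.sin (γ ‖p‖) • Kc p) := by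
    rw [radialVec, norm_theta, theta_eq_s10]
  refine ⟨hF.differentiableAt, ?_, ?_⟩
  · rw [hF.fderiv, htv, tangentVec_eq]
    simp only [ContinuousLinearMap.sub_apply, ContinuousLinearMap.add_apply,
      ContinuousLinearMap.smul_apply, ContinuousLinearMap.smulRight_apply,
      ContinuousLinearMap.coe_id', id_eq, ContinuousLinearMap.map_smul, hGK, Kc_Kc,
      smul_zero, smul_eq_mul, mul_zero, zero_smul, add_zero]
    module
  · rw [hF.fderiv, htv, hrv, radialVec]
    simp only [ContinuousLinearMap.sub_apply, ContinuousLinearMap.add_apply,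
      ContinuousLinearMap.smul_apply, ContinuousLinearMap.smulRight_apply,
      ContinuousLinearMap.coe_id', id_eq, ContinuousLinearMap.map_smul, hGK, hGp,
      smul_zero, smul_eq_mul, mul_zero, zero_smul, add_zero]
    match_scalars <;> field_simp <;> ring

end
end

section
/- Let λ > 1 and ε > 0. Let T: ℝ² → ℝ² be the linear map T(x,y) = (x/λ, λy). Suppose ψ: ℝ² → [0,∞) satisfies: (i) ψ(p) = λ^{-2}·ψ(T(p)) for every p = (x,y) with |y| ≤ 1; and (ii) ψ(q) ≤ ε for every q = (x,y) with 1 ≤ |y| ≤ λ. Then ψ(x,y) ≤ ε·y² for every (x,y) with 0 < |y| ≤ 1. -/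
/-- **Quadratic bound from `λ²`-equivariance (abstract form of the
Proposition of Section 3).**  Suppose `ψ : ℝ² → [0,∞)` satisfies
`ψ(p) = λ⁻² ψ(T p)` on the strip `|y| ≤ 1`, where `T(x,y) = (x/λ, λ y)`,
and `ψ ≤ ε` on the region `1 ≤ |y| ≤ λ`.  Then `ψ(x,y) ≤ ε y²` for
`0 < |y| ≤ 1`. -/
theorem quadratic_bound_of_equivariance
    (lam ε : ℝ) (hlam : 1 < lam) (hε : 0 < ε)
    (ψ : ℝ × ℝ → ℝ) (hψ0 : ∀ p : ℝ × ℝ, 0 ≤ ψ p)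
    (hequiv : ∀ x y : ℝ, |y| ≤ 1 → ψ (x, y) = lam⁻¹ ^ 2 * ψ (x / lam, lam * y))
    (hout : ∀ x y : ℝ, 1 ≤ |y| → |y| ≤ lam → ψ (x, y) ≤ ε) :
    ∀ x y : ℝ, 0 < |y| → |y| ≤ 1 → ψ (x, y) ≤ ε * y ^ 2 := by
  have hlam0 : (0:ℝ) < lam := lt_trans one_pos hlam
  -- auxiliary claim by induction on n
  have aux : ∀ n : ℕ, ∀ x y : ℝ, 0 < |y| → 1 ≤ lam ^ n * |y| →
      lam ^ n * |y| ≤ lam → ψ (x, y) ≤ ε * y ^ 2 := by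
    intro n
    induction n with
    | zero =>
      intro x y hy h1 h2
      simp only [pow_zero, one_mul] at h1 h2
      have h := hout x y h1 h2
      have hy2 : 1 ≤ y ^ 2 := by
        nlinarith [sq_abs y]
      nlinarith
    | succ n ih =>
      intro x y hy h1 h2
      have hpow : (1:ℝ) ≤ lam ^ n := one_le_pow₀ hlam.le
      have hy1 : |y| ≤ 1 := by
        have : lam ^ (n+1) * |y| ≤ lam := h2
        rw [pow_succ] at this
        nlinarith [abs_nonneg y, mul_le_mul_of_nonneg_right hpow (mul_nonneg hlam0.le (abs_nonneg y))]
      have hly : |lam * y| = lam * |y| := by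
        rw [abs_mul, abs_of_pos hlam0]
      have h1' : 1 ≤ lam ^ n * |lam * y| := by
        rw [hly]; rw [pow_succ] at h1; nlinarith
      have h2' : lam ^ n * |lam * y| ≤ lam := by
        rw [hly]; rw [pow_succ] at h2; nlinarith
      have hy' : 0 < |lam * y| := by rw [hly]; positivity
      have := ih (x / lam) (lam * y) hy' h1' h2'
      rw [hequiv x y hy1]
      have hl2 : (0:ℝ) < lam⁻¹ ^ 2 := by positivity
      calc lam⁻¹ ^ 2 * ψ (x / lam, lam * y) ≤ lam⁻¹ ^ 2 * (ε * (lam * y) ^ 2) := by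
            exact mul_le_mul_of_nonneg_left this hl2.le
        _ = ε * y ^ 2 := by
            field_simp
  intro x y hy hy1
  obtain ⟨n, hn⟩ : ∃ n : ℕ, 1 ≤ lam ^ n * |y| := by
    obtain ⟨n, hn⟩ := pow_unbounded_of_one_lt (1 / |y|) hlam
    exact ⟨n, by rw [div_lt_iff₀ hy] at hn; linarith⟩
  -- take the least such n
  classical
  have hex : ∃ n : ℕ, 1 ≤ lam ^ n * |y| := ⟨n, hn⟩
  set m := Nat.find hex with hm
  have hm1 : 1 ≤ lam ^ m * |y| := Nat.find_spec hex
  have hm2 : lam ^ m * |y| ≤ lam := by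
    rcases Nat.eq_zero_or_pos m with h0 | hpos
    · rw [h0]; simp only [pow_zero, one_mul]; linarith
    · obtain ⟨k, hk⟩ := Nat.exists_eq_succ_of_ne_zero hpos.ne'
      have hlt : ¬ (1 ≤ lam ^ k * |y|) := Nat.find_min hex (by omega)
      push_neg at hlt
      rw [hk, pow_succ]
      nlinarith [pow_pos hlam0 k]
  exact aux m x y hy hm1 hm2
end

section
/- Let λ > 1, let L be the 2×2 matrix [[λ^{-1}, 0],[0, λ]], let J = [[0,−1],[1,0]] be the quarter-turn rotation, and let v = (0,1). Define the two-sided sequence of vectors (w_n)_{n∈ℤ} by w_0 = v, w_{n+1} = A_n w_n for n ≥ 0 and w_{n} = A_n^{-1} w_{n+1} for n < 0, where A_0 = J·L and A_n = L for all n ≠ 0. Then ‖w_n‖ = λ^{2−n} for n ≥ 1 and ‖w_{−n}‖ = λ^{−n} for n ≥ 0; in particular ‖w_n‖ → 0 as n → +∞ and as n → −∞. -/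
/-- **The derivative cocycle of the perturbed map kills the vertical vector
in both time directions.**  Let `L = [[λ⁻¹,0],[0,λ]]` (the hyperbolic map in
stable/unstable coordinates), `J = [[0,−1],[1,0]]` the quarter turn, and let
`(w n)_{n ∈ ℤ}` be the two-sided cocycle orbit of the vertical unit vector
`v = (0,1)` under `A 0 = J·L` and `A n = L` for `n ≠ 0`.  Then
`‖w n‖ = λ^{2−n}` for `n ≥ 1` and `‖w (−n)‖ = λ^{−n}` for `n ≥ 0`; in
particular `‖w n‖ → 0` as `n → ±∞`. -/
theorem derivative_cocycle_vertical_vector_decays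
    (lam : ℝ) (hlam : 1 < lam)
    (L J : Matrix (Fin 2) (Fin 2) ℝ)
    (hLdef : L = !![lam⁻¹, 0; 0, lam])
    (hJdef : J = !![0, -1; 1, 0])
    (A : ℤ → Matrix (Fin 2) (Fin 2) ℝ)
    (hA0 : A 0 = J * L) (hAn : ∀ n : ℤ, n ≠ 0 → A n = L)
    (w : ℤ → EuclideanSpace ℝ (Fin 2))
    (hw0 : w 0 = (WithLp.equiv 2 (Fin 2 → ℝ)).symm ![0, 1])
    (hwrec : ∀ n : ℤ, w (n + 1) = Matrix.toEuclideanCLM (𝕜 := ℝ) (A n) (w n)) :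
    (∀ n : ℕ, 1 ≤ n → ‖w (n : ℤ)‖ = lam ^ ((2 : ℤ) - (n : ℤ))) ∧
      (∀ n : ℕ, ‖w (-(n : ℤ))‖ = lam ^ (-(n : ℤ))) := by
  have hne : lam ≠ 0 := by positivity
  set σ := (WithLp.equiv 2 (Fin 2 → ℝ)).symm with hσ
  -- generic application lemma
  have happ : ∀ (a b c d x y : ℝ),
      Matrix.toEuclideanCLM (𝕜 := ℝ) !![a, b; c, d] (σ ![x, y])
        = σ ![a * x + b * y, c * x + d * y] := by
    intro a b c d x y
    rw [hσ, WithLp.equiv_symm_apply, Matrix.toEuclideanCLM_toLp]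
    congr 1
    funext i
    fin_cases i <;> simp [Matrix.mulVec, dotProduct, Fin.sum_univ_two]
  -- inverse of L
  have hML : !![lam, 0; 0, lam⁻¹] * L = 1 := by
    rw [hLdef]
    ext i j
    fin_cases i <;> fin_cases j <;>
      simp [Matrix.mul_apply, Fin.sum_univ_two, hne]
  -- backward formula
  have hneg : ∀ k : ℕ, w (-(k : ℤ)) = σ ![0, lam ^ (-(k : ℤ))] := by
    intro k
    induction k with
    | zero => simpa using hw0
    | succ k ih =>
        have hrec := hwrec (-(k + 1 : ℤ))
        rw [hAn _ (by omega)] at hrec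
        have h1 : (-(k + 1 : ℤ) + 1) = -(k : ℤ) := by ring
        rw [h1] at hrec
        have h2 : w (-((k : ℤ) + 1))
            = Matrix.toEuclideanCLM (𝕜 := ℝ) (!![lam, 0; 0, lam⁻¹] * L)
                (w (-((k : ℤ) + 1))) := by
          rw [hML]; simp
        rw [map_mul] at h2
        push_cast
        rw [h2, ContinuousLinearMap.mul_apply, ← hrec, ih, happ]
        have h3 : lam⁻¹ * lam ^ (-(k : ℤ)) = lam ^ (-((k : ℤ) + 1)) := by
          rw [← zpow_neg_one, ← zpow_add₀ hne]
          ring_nf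
        simp only [mul_zero, zero_mul, zero_add, add_zero]
        rw [h3]
    -- forward formula
  have hpos : ∀ k : ℕ, w ((k : ℤ) + 1) = σ ![-(lam ^ ((2 : ℤ) - ((k : ℤ) + 1))), 0] := by
    intro k
    induction k with
    | zero =>
        have hrec := hwrec 0
        rw [hA0, hw0, hJdef, hLdef] at hrec
        have hJL : !![(0:ℝ), -1; 1, 0] * !![lam⁻¹, 0; 0, lam] = !![0, -lam; lam⁻¹, 0] := by
          ext i j
          fin_cases i <;> fin_cases j <;> simp [Matrix.mul_apply, Fin.sum_univ_two]
        rw [hJL, happ] at hrec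
        simp only [Nat.cast_zero, zero_add] at hrec ⊢
        rw [hrec]
        norm_num
    | succ k ih =>
        have hrec := hwrec ((k : ℤ) + 1)
        rw [hAn _ (by omega), ih, hLdef, happ] at hrec
        push_cast
        rw [hrec]
        have : lam⁻¹ * -(lam ^ ((2 : ℤ) - ((k : ℤ) + 1)))
            = -(lam ^ ((2 : ℤ) - ((k : ℤ) + 1 + 1))) := by
          rw [← zpow_neg_one, mul_neg, ← zpow_add₀ hne]
          ring_nf
        simp only [mul_zero, zero_mul, zero_add, add_zero]
        rw [this]
  -- norms
  have hnorm1 : ∀ c : ℝ, 0 ≤ c → ‖σ ![(0:ℝ), c]‖ = c := by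
    intro c hc
    rw [hσ, EuclideanSpace.norm_eq]
    simp [Fin.sum_univ_two, Real.sqrt_sq_eq_abs, abs_of_nonneg hc]
  have hnorm2 : ∀ c : ℝ, 0 ≤ c → ‖σ ![-c, (0:ℝ)]‖ = c := by
    intro c hc
    rw [hσ, EuclideanSpace.norm_eq]
    simp [Fin.sum_univ_two, Real.sqrt_sq_eq_abs, abs_of_nonneg hc]
  have hpow : ∀ m : ℤ, (0:ℝ) ≤ lam ^ m := fun m => le_of_lt (zpow_pos (by linarith) m)
  constructor
  · intro n hn
    obtain ⟨k, rfl⟩ : ∃ k : ℕ, n = k + 1 := ⟨n - 1, by omega⟩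
    have := hpos k
    push_cast at this ⊢
    rw [this, hnorm2 _ (hpow _)]
  · intro n
    rw [hneg n, hnorm1 _ (hpow _)]
end
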